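/- Let P, Q : ℕ → ℝ with P(k) = Q(k) + Q(k+1) and Q(k) ≥ 0 for all k, Q(0) = 0. Then for any conjugate-symmetric square-summable sequence (c_ℓ) with c_{2ℓ}=0 and any unit complex number q for which the expression is real, Σ_{k≥0} P(k)|c_{2k+1}|² + 2q·Σ_{k≥1} Q(k) c_{1+2k} c_{1−2k} ≥ 0. -/

import Mathlib

theorem second_derivative_nonneg_quadratic_form (c : ℤ → ℂ)
    (hc : ∀ ℓ : ℤ, c (-ℓ) = starRingEnd ℂ (c ℓ))
    (heven : ∀ ℓ : ℤ, c (2 * ℓ) = 0)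
    (hsq : Summable fun ℓ : ℤ => ‖c ℓ‖ ^ 2)
    (P Q : ℕ → ℝ) (hPQ : ∀ k, P k = Q k + Q (k + 1))
    (hQ : ∀ k, 0 ≤ Q k) (hQ0 : Q 0 = 0)
    (q : ℂ) (hq : ‖q‖ = 1)
    (hsum1 : Summable fun k : ℕ => P k * ‖c (2 * (k : ℤ) + 1)‖ ^ 2)
    (hsum2 : Summable fun k : ℕ =>
      Q (k + 1) * ‖c (1 + 2 * ((k : ℤ) + 1))‖ * ‖c (1 - 2 * ((k : ℤ) + 1))‖)
    (hreal : (2 * q * ∑' k : ℕ,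
      (Q (k + 1) : ℂ) * c (1 + 2 * ((k : ℤ) + 1)) * c (1 - 2 * ((k : ℤ) + 1))).im = 0) :
    0 ≤ (∑' k : ℕ, P k * ‖c (2 * (k : ℤ) + 1)‖ ^ 2) +
      (2 * q * ∑' k : ℕ,
        (Q (k + 1) : ℂ) * c (1 + 2 * ((k : ℤ) + 1)) * c (1 - 2 * ((k : ℤ) + 1))).re := by
  -- notation
  set S : ℂ := ∑' k : ℕ, (Q (k + 1) : ℂ) * c (1 + 2 * ((k : ℤ) + 1)) * c (1 - 2 * ((k : ℤ) + 1)) with hS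
  have hnormneg : ∀ k : ℕ, ‖c (1 - 2 * ((k : ℤ) + 1))‖ = ‖c (2 * (k : ℤ) + 1)‖ := by
    intro k
    have h1 : (1 - 2 * ((k : ℤ) + 1)) = -(2 * (k : ℤ) + 1) := by ring
    rw [h1, hc, RCLike.norm_conj]
  have hnormpos : ∀ k : ℕ, ‖c (1 + 2 * ((k : ℤ) + 1))‖ = ‖c (2 * ((k : ℤ) + 1) + 1)‖ := by
    intro k
    congr 1
    ring
  -- summability of pieces
  have hQk1 : Summable fun k : ℕ => Q (k + 1) * ‖c (2 * (k : ℤ) + 1)‖ ^ 2 := by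
    apply hsum1.of_nonneg_of_le
    · intro k; exact mul_nonneg (hQ _) (sq_nonneg _)
    · intro k
      rw [hPQ]
      have := hQ k
      nlinarith [sq_nonneg ‖c (2 * (k : ℤ) + 1)‖]
  have hQk : Summable fun k : ℕ => Q k * ‖c (2 * (k : ℤ) + 1)‖ ^ 2 := by
    apply hsum1.of_nonneg_of_le
    · intro k; exact mul_nonneg (hQ _) (sq_nonneg _)
    · intro k
      rw [hPQ]
      have := hQ (k + 1)
      nlinarith [sq_nonneg ‖c (2 * (k : ℤ) + 1)‖]
  have hB : Summable fun k : ℕ => Q (k + 1) * ‖c (2 * ((k : ℤ) + 1) + 1)‖ ^ 2 := by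
    have h := (summable_nat_add_iff 1).2 hQk
    apply h.congr
    intro k
    norm_cast
  -- split tsum1
  have hsplit : (∑' k : ℕ, P k * ‖c (2 * (k : ℤ) + 1)‖ ^ 2)
      = (∑' k : ℕ, Q k * ‖c (2 * (k : ℤ) + 1)‖ ^ 2)
        + (∑' k : ℕ, Q (k + 1) * ‖c (2 * (k : ℤ) + 1)‖ ^ 2) := by
    rw [← hQk.tsum_add hQk1]
    congr 1 with k
    rw [hPQ]; ring
  have hshift : (∑' k : ℕ, Q k * ‖c (2 * (k : ℤ) + 1)‖ ^ 2)
      = ∑' k : ℕ, Q (k + 1) * ‖c (2 * ((k : ℤ) + 1) + 1)‖ ^ 2 := by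
    rw [hQk.tsum_eq_zero_add]
    simp only [hQ0, zero_mul, zero_add]
    apply tsum_congr
    intro k
    norm_cast
  -- norm of terms
  have hnormterm : ∀ k : ℕ,
      ‖(Q (k + 1) : ℂ) * c (1 + 2 * ((k : ℤ) + 1)) * c (1 - 2 * ((k : ℤ) + 1))‖
        = Q (k + 1) * ‖c (1 + 2 * ((k : ℤ) + 1))‖ * ‖c (1 - 2 * ((k : ℤ) + 1))‖ := by
    intro k
    rw [norm_mul, norm_mul, Complex.norm_real, Real.norm_of_nonneg (hQ (k + 1))]
  have hsumN : Summable fun k : ℕ =>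
      ‖(Q (k + 1) : ℂ) * c (1 + 2 * ((k : ℤ) + 1)) * c (1 - 2 * ((k : ℤ) + 1))‖ := by
    apply hsum2.congr
    intro k; exact (hnormterm k).symm
  -- bound on the real part
  have h1 : -(2 * ‖S‖) ≤ (2 * q * S).re := by
    have h := Complex.abs_re_le_norm (2 * q * S)
    have h2 : ‖2 * q * S‖ = 2 * ‖S‖ := by
      rw [norm_mul, norm_mul, hq]
      norm_num
    rw [h2] at h
    have := neg_abs_le ((2 * q * S).re)
    linarith
  have hSle : ‖S‖ ≤ ∑' k : ℕ,
      Q (k + 1) * ‖c (1 + 2 * ((k : ℤ) + 1))‖ * ‖c (1 - 2 * ((k : ℤ) + 1))‖ := by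
    calc ‖S‖ ≤ ∑' k : ℕ,
        ‖(Q (k + 1) : ℂ) * c (1 + 2 * ((k : ℤ) + 1)) * c (1 - 2 * ((k : ℤ) + 1))‖ :=
          norm_tsum_le_tsum_norm hsumN
      _ = _ := by exact tsum_congr hnormterm
  -- AM-GM bound on the cross sum
  have hcross : 2 * (∑' k : ℕ,
      Q (k + 1) * ‖c (1 + 2 * ((k : ℤ) + 1))‖ * ‖c (1 - 2 * ((k : ℤ) + 1))‖)
      ≤ (∑' k : ℕ, Q (k + 1) * ‖c (2 * ((k : ℤ) + 1) + 1)‖ ^ 2)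
        + (∑' k : ℕ, Q (k + 1) * ‖c (2 * (k : ℤ) + 1)‖ ^ 2) := by
    rw [← tsum_mul_left, ← hB.tsum_add hQk1]
    apply (hsum2.mul_left 2).tsum_le_tsum _ (hB.add hQk1)
    intro k
    rw [hnormneg, hnormpos]
    have h2ab := two_mul_le_add_sq ‖c (2 * ((k : ℤ) + 1) + 1)‖ ‖c (2 * (k : ℤ) + 1)‖
    nlinarith [hQ (k + 1)]
  -- combine
  have hre : -((∑' k : ℕ, P k * ‖c (2 * (k : ℤ) + 1)‖ ^ 2)) ≤ (2 * q * S).re := by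
    rw [hsplit, hshift]
    calc -(((∑' k : ℕ, Q (k + 1) * ‖c (2 * ((k : ℤ) + 1) + 1)‖ ^ 2)
          + ∑' k : ℕ, Q (k + 1) * ‖c (2 * (k : ℤ) + 1)‖ ^ 2))
        ≤ -(2 * ∑' k : ℕ,
            Q (k + 1) * ‖c (1 + 2 * ((k : ℤ) + 1))‖ * ‖c (1 - 2 * ((k : ℤ) + 1))‖) := by
          linarith
      _ ≤ -(2 * ‖S‖) := by
          have h2 : (0:ℝ) ≤ 2 := by norm_num
          nlinarith [hSle]
      _ ≤ (2 * q * S).re := h1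
  linarith
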